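/- Let c > 2 and set α = c − 2. Let i, j ∈ {+,−}, let Λ be a diamond domain and Δ = Δ(Λ). Define the probability measure P̄^{ij}_{Λ,α} on Ω^{spin,ij}_Λ × Ω^{SI,11}_Δ giving the pair (σ, η) probability proportional to α^{N_Δ(η)} 1{σ ∼ η}. Then the first marginal of P̄^{ij}_{Λ,α} is the spin measure P^{spin,ij}_{Λ,c} and the second marginal is the superimposed measure P^{SI,11}_{Δ,α,2}. -/

import Mathlib

open MeasureTheory Filter Topology
open scoped ENNReal

namespace SixVertex

/-- Vertices of `ℤ²`. -/
abbrev Vx : Type := ℤ × ℤ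
/-- Faces of `ℤ²`, i.e. elements of `(ℤ²)* = ℤ² + (1/2,1/2)`; the face `p` corresponds to the
point `p + (1/2,1/2)`, i.e. to the unit square with corners `p`, `p+(1,0)`, `p+(0,1)`, `p+(1,1)`. -/
abbrev Face : Type := ℤ × ℤ

/-- `ℓ¹` (= graph) distance between faces in `(ℤ²)*`. -/
def fdist (p q : Face) : ℕ := (p.1 - q.1).natAbs + (p.2 - q.2).natAbs

/-- `ℓ¹` (= graph) distance between vertices of `ℤ²`. -/
def vdist (x y : Vx) : ℕ := (x.1 - y.1).natAbs + (x.2 - y.2).natAbs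

/-- Adjacency in `ℤ²` (or in `(ℤ²)*`). -/
def VAdj (x y : Vx) : Prop := vdist x y = 1

/-- The diagonal edges `E(𝕃) ∪ E(𝕃*)`, encoded as pairs `(x, b)` where `x ∈ ℤ²` is the vertex
of `ℤ²` the edge passes through, and `b` tells which of the two diagonals at `x` it is.
The cross at a vertex `x` consists of the two edges `(x, false)` and `(x, true)`. -/
abbrev Edge : Type := Vx × Bool

/-- The two endpoints (faces) of a diagonal edge: `(x, false)` joins the faces `x - (1,1)` and
`x` (the two faces at `x` of the parity of `x`), while `(x, true)` joins `x - (1,0)` and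
`x - (0,1)`. -/
def ep (e : Edge) : Face × Face :=
  if e.2 then (e.1 - (1, 0), e.1 - (0, 1)) else (e.1 - (1, 1), e.1)

/-- The edge `e` belongs to `E(𝕃)` (otherwise it belongs to `E(𝕃*)`). -/
def inL (e : Edge) : Prop := (Even (e.1.1 + e.1.2) ↔ e.2 = false)

/-- Configurations `η ∈ {0,1}^{E(𝕃) ∪ E(𝕃*)}` (the pair `(η⁰, η¹)` is encoded as a single
function on all diagonal edges). -/
abbrev SIConf : Type := Edge → Bool

/-- The cross at `x` is open in `η`. -/
def OpenCross (η : SIConf) (x : Vx) : Prop := η (x, false) = true ∧ η (x, true) = true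

/-- No cross is closed in `η`, i.e. `η` is a superimposed configuration (`η ∈ Ω^SI`). -/
def NoClosedCross (η : SIConf) : Prop := ∀ x : Vx, η (x, false) = true ∨ η (x, true) = true

/-- Two faces joined by an open edge of `η`. -/
def OpenAdj (η : SIConf) (p q : Face) : Prop :=
  ∃ e : Edge, η e = true ∧ (ep e = (p, q) ∨ ep e = (q, p))

/-- Connectivity by open paths. -/
def ConnectedIn (η : SIConf) : Face → Face → Prop := Relation.ReflTransGen (OpenAdj η)

/-- The cluster of the face `p` in `η`. -/
def cluster (η : SIConf) (p : Face) : Set Face := {q | ConnectedIn η p q}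

/-- The face `p` is incident to some edge of `Δ`. -/
def TouchesDelta (Δ : Set Edge) (p : Face) : Prop := ∃ e ∈ Δ, (ep e).1 = p ∨ (ep e).2 = p

/-- `N_Δ(η)`: the number of open crosses of `η` having an edge in `Δ`. -/
noncomputable def NDelta (Δ : Set Edge) (η : SIConf) : ℕ :=
  Set.ncard {x : Vx | OpenCross η x ∧ ((x, false) ∈ Δ ∨ (x, true) ∈ Δ)}

/-- `k_Δ(η) = k_Δ(η⁰) + k_Δ(η¹)`: the total number of clusters of `η` (equivalently, of `η⁰`
in `𝕃` plus those of `η¹` in `𝕃*`, since open edges never join faces of different parity)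
containing a face incident to an edge of `Δ`. -/
noncomputable def kDelta (Δ : Set Edge) (η : SIConf) : ℕ :=
  Set.ncard {C : Set Face | ∃ p : Face, TouchesDelta Δ p ∧ C = cluster η p}

/-- `η` is a superimposed configuration agreeing with `τ` off `Δ` (`η ∈ Ω^{SI,τ}_Δ`). -/
def SIok (Δ : Set Edge) (τ : SIConf) (η : SIConf) : Prop :=
  NoClosedCross η ∧ ∀ e ∉ Δ, η e = τ e

/-- The weight `α^{N_Δ(η)} q^{k_Δ(η)}` of the superimposed model. -/
noncomputable def SIweight (Δ : Set Edge) (α q : ℝ) (η : SIConf) : ℝ≥0∞ :=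
  ENNReal.ofReal (α ^ NDelta Δ η * q ^ kDelta Δ η)

/-- The finite-volume superimposed measure `P^{SI,τ}_{Δ,α,q}`. -/
noncomputable def SIfin (Δ : Set Edge) (α q : ℝ) (τ : SIConf) : Measure SIConf :=
  (∑' η : {η : SIConf // SIok Δ τ η}, SIweight Δ α q η.1)⁻¹ •
    Measure.sum (fun η : {η : SIConf // SIok Δ τ η} => SIweight Δ α q η.1 • Measure.dirac η.1)

/-- The all-open ("wired-wired", `11`) boundary condition. -/
def wiredwired : SIConf := fun _ => true

/-! ### Diamond domains -/

/-- The diamond `Λ = {u : dist(u,v) ≤ n}` of faces. -/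
def diamond (v : Face) (n : ℕ) : Set Face := {u | fdist u v ≤ n}

/-- `(v, n)` determines a diamond domain: `v ∈ 𝕃` and `n` a positive even integer. -/
def IsDiamond (v : Face) (n : ℕ) : Prop := Even (v.1 + v.2) ∧ 0 < n ∧ Even n

/-- The edge of `E(𝕃)` in the cross at `x`. -/
def LEdgeAt (x : Vx) : Edge := if Even (x.1 + x.2) then (x, false) else (x, true)

/-- `Δ(Λ)`: edges of `𝕃` with both endpoints in `Λ`, together with their dual edges
(equivalently: the full crosses whose `𝕃`-edge has both endpoints in `Λ`). -/
def deltaOf (v : Face) (n : ℕ) : Set Edge :=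
  {e | (ep (LEdgeAt e.1)).1 ∈ diamond v n ∧ (ep (LEdgeAt e.1)).2 ∈ diamond v n}

/-! ### Spin configurations -/

/-- Spin configurations on the faces; `true` is the spin `+`, `false` the spin `-`. -/
abbrev SpinConf : Type := Face → Bool

/-- The ice rule: at each vertex of `ℤ²`, at least one of the two diagonals consists of
equal spins. -/
def IceRule (σ : SpinConf) : Prop :=
  ∀ x : Vx, σ (x - (1, 1)) = σ x ∨ σ (x - (1, 0)) = σ (x - (0, 1))

/-- `x` is a saddle point of `σ`: both diagonals at `x` have constant spin. -/
def Saddle (σ : SpinConf) (x : Vx) : Prop :=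
  σ (x - (1, 1)) = σ x ∧ σ (x - (1, 0)) = σ (x - (0, 1))

/-- The face `p` is incident to the vertex `x` of `ℤ²` (i.e. `x` is a corner of `p`). -/
def FaceInc (p : Face) (x : Vx) : Prop :=
  ∃ a ∈ ({0, 1} : Set ℤ), ∃ b ∈ ({0, 1} : Set ℤ), p = x - (a, b)

/-- Vertices of `𝛬̂`: vertices of `ℤ²` on or inside the circuit `∂†Λ`, i.e. corners of
faces of `Λ`. -/
def HatVert (v : Face) (n : ℕ) (x : Vx) : Prop := ∃ p ∈ diamond v n, FaceInc p x

/-- Internal vertices of `𝛬̂`: vertices all of whose four incident `ℤ²`-edges belong to the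
induced subgraph `𝛬̂`. -/
def InternalVert (v : Face) (n : ℕ) (x : Vx) : Prop :=
  HatVert v n x ∧ ∀ y : Vx, VAdj x y → HatVert v n y

/-- `#saddle_Λ(σ)`: the number of saddle points of `σ` among internal vertices of `𝛬̂`. -/
noncomputable def saddleCount (v : Face) (n : ℕ) (σ : SpinConf) : ℕ :=
  Set.ncard {x : Vx | InternalVert v n x ∧ Saddle σ x}

/-- `Ω^{spin,ij}_Λ`: spin configurations satisfying the ice rule, equal to `i` on the outer
boundary of `Λ` and on all of `𝕃*` outside `Λ`, and equal to `j` on the inner boundary of `Λ`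
and on all of `𝕃` outside `Λ`.  (All faces at distance `≥ n` from the center receive the
boundary spin of their sublattice.) -/
def OmegaSpin (v : Face) (n : ℕ) (i j : Bool) (σ : SpinConf) : Prop :=
  IceRule σ ∧ ∀ p : Face, n ≤ fdist p v → σ p = (if Even (p.1 + p.2) then j else i)

/-- The weight `c^{#saddle_Λ(σ)}`. -/
noncomputable def spinWeight (v : Face) (n : ℕ) (c : ℝ) (σ : SpinConf) : ℝ≥0∞ :=
  ENNReal.ofReal (c ^ saddleCount v n σ)

/-- The finite-volume spin measure `P^{spin,ij}_{Λ,c}`. -/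
noncomputable def spinFin (v : Face) (n : ℕ) (c : ℝ) (i j : Bool) : Measure SpinConf :=
  (∑' σ : {σ : SpinConf // OmegaSpin v n i j σ}, spinWeight v n c σ.1)⁻¹ •
    Measure.sum (fun σ : {σ : SpinConf // OmegaSpin v n i j σ} =>
      spinWeight v n c σ.1 • Measure.dirac σ.1)

/-- Compatibility `σ ∼ η`: every open edge of `η` has endpoints with equal spins. -/
def Compat (σ : SpinConf) (η : SIConf) : Prop :=
  ∀ e : Edge, η e = true → σ (ep e).1 = σ (ep e).2

/-! ### Bernoulli site percolation on `ℤ²` and its critical probability -/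

/-- `ν` is the law of i.i.d. Bernoulli(`p`) site percolation on `ℤ²`. -/
def IsBernoulliField (p : ℝ) (ν : Measure (Vx → Bool)) : Prop :=
  IsProbabilityMeasure ν ∧
    ∀ (S : Finset Vx) (s : Vx → Bool),
      ν {ω | ∀ x ∈ S, ω x = s x} =
        ∏ x ∈ S, (if s x = true then ENNReal.ofReal p else ENNReal.ofReal (1 - p))

/-- Site-percolation adjacency: neighbouring open sites. -/
def SiteOpenAdj (ω : Vx → Bool) (x y : Vx) : Prop := VAdj x y ∧ ω x = true ∧ ω y = true

/-- The open cluster of a site. -/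
def siteCluster (ω : Vx → Bool) (x : Vx) : Set Vx :=
  {y | Relation.ReflTransGen (SiteOpenAdj ω) x y}

/-- The critical probability `p_c` of Bernoulli site percolation on `ℤ²`: the supremum of
`p ∈ [0,1]` for which Bernoulli(`p`) site percolation a.s. has no infinite open cluster. -/
noncomputable def pcSite : ℝ :=
  sSup {p : ℝ | 0 ≤ p ∧ p ≤ 1 ∧ ∀ ν : Measure (Vx → Bool), IsBernoulliField p ν →
    ν {ω | ∃ x, ω x = true ∧ (siteCluster ω x).Infinite} = 0}

/-! ### Infinite-volume limits -/

/-- A sequence of diamond domains increasing to `(ℤ²)*`. -/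
def DiamondExhaustion (v : ℕ → Face) (n : ℕ → ℕ) : Prop :=
  (∀ k, IsDiamond (v k) (n k)) ∧
  (∀ k, diamond (v k) (n k) ⊆ diamond (v (k + 1)) (n (k + 1))) ∧
  (∀ u : Face, ∃ k, u ∈ diamond (v k) (n k))

/-- `P` is the weak limit of the finite-volume superimposed measures with boundary condition
`τ` along any sequence of diamond domains increasing to `(ℤ²)*`. -/
def IsSILimitFor (α q : ℝ) (τ : SIConf) (P : Measure SIConf) : Prop :=
  ∀ (v : ℕ → Face) (n : ℕ → ℕ), DiamondExhaustion v n →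
    ∀ f : SIConf → ℝ, Continuous f → (∃ M, ∀ η, |f η| ≤ M) →
      Tendsto (fun k => ∫ η, f η ∂(SIfin (deltaOf (v k) (n k)) α q τ)) atTop
        (nhds (∫ η, f η ∂P))

/-- `P` is the infinite-volume superimposed measure `P^{SI}_{α,q}`: the common weak limit of
the finite-volume measures over all boundary conditions. -/
def IsSILimit (α q : ℝ) (P : Measure SIConf) : Prop :=
  IsProbabilityMeasure P ∧ ∀ τ : SIConf, NoClosedCross τ → IsSILimitFor α q τ P

/-- `P` is the weak limit `P^{spin,ij}_c` of the finite-volume spin measures along any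
sequence of diamond domains increasing to `(ℤ²)*`. -/
def IsSpinLimit (c : ℝ) (i j : Bool) (P : Measure SpinConf) : Prop :=
  IsProbabilityMeasure P ∧
    ∀ (v : ℕ → Face) (n : ℕ → ℕ), DiamondExhaustion v n →
      ∀ f : SpinConf → ℝ, Continuous f → (∃ M, ∀ σ, |f σ| ≤ M) →
        Tendsto (fun k => ∫ σ, f σ ∂(spinFin (v k) (n k) c i j)) atTop (nhds (∫ σ, f σ ∂P))

end SixVertex

namespace SixVertex

section Aux

def crossIn (v : Face) (n : ℕ) (x : Vx) : Prop :=
  (ep (LEdgeAt x)).1 ∈ diamond v n ∧ (ep (LEdgeAt x)).2 ∈ diamond v n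

lemma ep_false (x : Vx) : ep (x, false) = ((x.1 - 1, x.2 - 1), x) := rfl
lemma ep_true (x : Vx) : ep (x, true) = ((x.1 - 1, x.2 - 0), (x.1 - 0, x.2 - 1)) := rfl

lemma mem_deltaOf {v n e} : e ∈ deltaOf v n ↔ crossIn v n e.1 := Iff.rfl

lemma psub_def (x y : ℤ × ℤ) : x - y = (x.1 - y.1, x.2 - y.2) := rfl

lemma hatVert_iff (v : Face) (n : ℕ) (x : Vx) :
    HatVert v n x ↔ (fdist x v ≤ n ∨ fdist (x.1 - 1, x.2) v ≤ n ∨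
      fdist (x.1, x.2 - 1) v ≤ n ∨ fdist (x.1 - 1, x.2 - 1) v ≤ n) := by
  constructor
  · rintro ⟨p, hp, a, ha, b, hb, rfl⟩
    simp only [Set.mem_insert_iff, Set.mem_singleton_iff] at ha hb
    simp only [diamond, Set.mem_setOf_eq, psub_def] at hp
    rcases ha with rfl | rfl <;> rcases hb with rfl | rfl <;>
      simp only [fdist] at hp ⊢ <;> omega
  · rintro (h | h | h | h)
    · exact ⟨x, h, 0, by simp, 0, by simp, by simp [psub_def]⟩
    · exact ⟨(x.1 - 1, x.2), h, 1, by simp, 0, by simp, by simp [psub_def]⟩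
    · exact ⟨(x.1, x.2 - 1), h, 0, by simp, 1, by simp, by simp [psub_def]⟩
    · exact ⟨(x.1 - 1, x.2 - 1), h, 1, by simp, 1, by simp, by simp [psub_def]⟩

lemma vadj_iff (x y : Vx) : VAdj x y ↔
    (y = (x.1 + 1, x.2) ∨ y = (x.1 - 1, x.2) ∨ y = (x.1, x.2 + 1) ∨ y = (x.1, x.2 - 1)) := by
  unfold VAdj vdist
  rw [show (y = (x.1 + 1, x.2)) ↔ y.1 = x.1 + 1 ∧ y.2 = x.2 from Prod.ext_iff,
    show (y = (x.1 - 1, x.2)) ↔ y.1 = x.1 - 1 ∧ y.2 = x.2 from Prod.ext_iff,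
    show (y = (x.1, x.2 + 1)) ↔ y.1 = x.1 ∧ y.2 = x.2 + 1 from Prod.ext_iff,
    show (y = (x.1, x.2 - 1)) ↔ y.1 = x.1 ∧ y.2 = x.2 - 1 from Prod.ext_iff]
  omega

set_option maxHeartbeats 1600000 in
lemma internal_iff_crossIn {v : Face} {n : ℕ} (hΛ : IsDiamond v n) (x : Vx) :
    InternalVert v n x ↔ crossIn v n x := by
  obtain ⟨hv, hn, hne⟩ := hΛ
  have hI : InternalVert v n x ↔ (HatVert v n x ∧ HatVert v n (x.1+1, x.2) ∧
      HatVert v n (x.1-1, x.2) ∧ HatVert v n (x.1, x.2+1) ∧ HatVert v n (x.1, x.2-1)) := by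
    constructor
    · rintro ⟨h, h4⟩
      exact ⟨h, h4 _ ((vadj_iff x _).2 (by tauto)), h4 _ ((vadj_iff x _).2 (by tauto)),
        h4 _ ((vadj_iff x _).2 (by tauto)), h4 _ ((vadj_iff x _).2 (by tauto))⟩
    · rintro ⟨h0, h1, h2, h3, h4⟩
      refine ⟨h0, fun y hy => ?_⟩
      rcases (vadj_iff x y).1 hy with rfl | rfl | rfl | rfl <;> assumption
  rw [hI]
  unfold crossIn LEdgeAt diamond
  rcases Int.even_or_odd (x.1 + x.2) with hx | hx
  · rw [if_pos hx]
    simp only [hatVert_iff, Set.mem_setOf_eq, fdist, psub_def, ep_false]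
    rw [Int.even_iff] at hx hv; rw [Nat.even_iff] at hne
    omega
  · rw [if_neg (Int.not_even_iff_odd.mpr hx)]
    simp only [hatVert_iff, Set.mem_setOf_eq, fdist, psub_def, ep_true, sub_zero]
    rw [Int.odd_iff] at hx; rw [Int.even_iff] at hv; rw [Nat.even_iff] at hne
    omega


lemma ep_parity (e : Edge) :
    Even ((ep e).1.1 + (ep e).1.2) ↔ Even ((ep e).2.1 + (ep e).2.2) := by
  rcases e with ⟨x, b⟩
  cases b <;> simp only [ep_false, ep_true, Int.even_iff, sub_zero] <;> omega

lemma not_crossIn_far {v : Face} {n : ℕ} (hΛ : IsDiamond v n) {x : Vx}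
    (hx : ¬ crossIn v n x) :
    n ≤ fdist (x - (1,1)) v ∧ n ≤ fdist (x - (1,0)) v ∧
      n ≤ fdist (x - (0,1)) v ∧ n ≤ fdist x v := by
  obtain ⟨hv, hn, hne⟩ := hΛ
  unfold crossIn LEdgeAt diamond at hx
  rw [Int.even_iff] at hv; rw [Nat.even_iff] at hne
  rcases Int.even_or_odd (x.1 + x.2) with hx2 | hx2
  · rw [if_pos hx2] at hx
    rw [Int.even_iff] at hx2
    simp only [ep_false, Set.mem_setOf_eq, fdist, psub_def, not_and_or, not_le] at hx
    unfold fdist; simp only [psub_def]; omega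
  · rw [if_neg (Int.not_even_iff_odd.mpr hx2)] at hx
    rw [Int.odd_iff] at hx2
    simp only [ep_true, Set.mem_setOf_eq, fdist, psub_def, not_and_or, not_le, sub_zero] at hx
    unfold fdist; simp only [psub_def]; omega

lemma parity_sub11 (x : Vx) : Even ((x - (1,1)).1 + (x - (1,1)).2) ↔ Even (x.1 + x.2) := by
  simp only [psub_def, Int.even_iff]; omega

lemma parity_sub10 (x : Vx) :
    Even ((x - (1,0)).1 + (x - (1,0)).2) ↔ Even ((x - (0,1)).1 + (x - (0,1)).2) := by
  simp only [psub_def, Int.even_iff]; omega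

lemma saddle_of_not_crossIn {v : Face} {n : ℕ} {i j : Bool} {σ : SpinConf}
    (hΛ : IsDiamond v n) (hσ : OmegaSpin v n i j σ) {x : Vx}
    (hx : ¬ crossIn v n x) : Saddle σ x := by
  obtain ⟨h1, h2, h3, h4⟩ := not_crossIn_far hΛ hx
  constructor
  · rw [hσ.2 _ h1, hσ.2 _ h4]
    by_cases h : Even (x.1 + x.2)
    · rw [if_pos ((parity_sub11 x).mpr h), if_pos h]
    · rw [if_neg fun hh => h ((parity_sub11 x).mp hh), if_neg h]
  · rw [hσ.2 _ h2, hσ.2 _ h3]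
    by_cases h : Even ((x - (0,1)).1 + (x - (0,1)).2)
    · rw [if_pos ((parity_sub10 x).mpr h), if_pos h]
    · rw [if_neg fun hh => h ((parity_sub10 x).mp hh), if_neg h]

lemma Dset_finite (v : Face) (n : ℕ) : {x : Vx | crossIn v n x}.Finite := by
  apply Set.Finite.subset
    (Finset.finite_toSet (Finset.Icc ((v.1 - (n+2), v.2 - (n+2)) : Vx) (v.1 + (n+2), v.2 + (n+2))))
  intro x hx
  simp only [Set.mem_setOf_eq] at hx
  unfold crossIn LEdgeAt diamond at hx
  simp only [Finset.coe_Icc, Set.mem_Icc, Prod.le_def]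
  rcases Int.even_or_odd (x.1 + x.2) with hx2 | hx2
  · rw [if_pos hx2] at hx
    simp only [ep_false, Set.mem_setOf_eq, fdist, psub_def] at hx
    omega
  · rw [if_neg (Int.not_even_iff_odd.mpr hx2)] at hx
    simp only [ep_true, Set.mem_setOf_eq, fdist, psub_def] at hx
    omega

noncomputable def Dfin (v : Face) (n : ℕ) : Finset Vx := (Dset_finite v n).toFinset

lemma mem_Dfin {v : Face} {n : ℕ} {x : Vx} : x ∈ Dfin v n ↔ crossIn v n x :=
  Set.Finite.mem_toFinset _

/-- allowed local configurations of `η` at the cross `x`, given `σ`. -/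
abbrev allowedP (σ : SpinConf) (x : Vx) (bp : Bool × Bool) : Prop :=
  (bp.1 = true ∨ bp.2 = true) ∧ (bp.1 = true → σ (x - (1,1)) = σ x) ∧
    (bp.2 = true → σ (x - (1,0)) = σ (x - (0,1)))

def allowedF (σ : SpinConf) (x : Vx) : Finset (Bool × Bool) :=
  Finset.univ.filter (fun bp => allowedP σ x bp)

abbrev sadP (σ : SpinConf) (x : Vx) : Prop :=
  σ (x - (1,1)) = σ x ∧ σ (x - (1,0)) = σ (x - (0,1))

lemma saddle_iff_sadP {σ : SpinConf} {x : Vx} : Saddle σ x ↔ sadP σ x := Iff.rfl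

/-- explicit inverse for `key1Equiv` -/
noncomputable def key1Inv (v : Face) (n : ℕ) (g : (x : ↥(Dfin v n)) → Bool × Bool) : SIConf :=
  fun e => if h : e.1 ∈ Dfin v n then
      (bif e.2 then (g ⟨e.1, h⟩).2 else (g ⟨e.1, h⟩).1) else true

set_option maxHeartbeats 1000000 in
/-- bijection -/
noncomputable def key1Equiv (v : Face) (n : ℕ) (i j : Bool) (σ : SpinConf)
    (hΛ : IsDiamond v n) (hσ : OmegaSpin v n i j σ) :
    {η : SIConf // SIok (deltaOf v n) wiredwired η ∧ Compat σ η} ≃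
      ↥(Fintype.piFinset (fun x : ↥(Dfin v n) => allowedF σ x.1)) where
  toFun η := ⟨fun x => (η.1 (x.1, false), η.1 (x.1, true)), by
    rw [Fintype.mem_piFinset]
    intro x
    rw [allowedF, Finset.mem_filter]
    refine ⟨Finset.mem_univ _, η.2.1.1 x.1, fun h => ?_, fun h => ?_⟩
    · exact η.2.2 (x.1, false) h
    · exact η.2.2 (x.1, true) h⟩
  invFun g := ⟨key1Inv v n g.1, by
    unfold key1Inv
    have hg := Fintype.mem_piFinset.mp g.2
    refine ⟨⟨fun x => ?_, fun e he => ?_⟩, fun e he => ?_⟩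
    · by_cases h : x ∈ Dfin v n
      · have := hg ⟨x, h⟩
        rw [allowedF, Finset.mem_filter] at this
        simp only [dif_pos h, cond_false, cond_true]
        exact this.2.1
      · simp [dif_neg h]
    · have h : ¬ e.1 ∈ Dfin v n := fun hh => he (mem_deltaOf.mpr (mem_Dfin.mp hh))
      simp only [dif_neg h]; rfl
    · rcases e with ⟨x, b⟩
      by_cases h : x ∈ Dfin v n
      · have := hg ⟨x, h⟩
        rw [allowedF, Finset.mem_filter] at this
        cases b
        · simp only [dif_pos h, cond_false] at he
          exact this.2.2.1 he
        · simp only [dif_pos h, cond_true] at he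
          exact this.2.2.2 he
      · have hs := saddle_of_not_crossIn hΛ hσ (fun hc => h (mem_Dfin.mpr hc))
        cases b
        · exact hs.1
        · exact hs.2⟩
  left_inv η := by
    apply Subtype.ext
    show key1Inv v n _ = _
    unfold key1Inv
    funext e
    rcases e with ⟨x, b⟩
    by_cases h : x ∈ Dfin v n
    · cases b <;> simp only [dif_pos h, cond_false, cond_true]
    · simp only [dif_neg h]
      exact (η.2.1.2 (x, b) (fun hh => h (mem_Dfin.mpr (mem_deltaOf.mp hh)))).symm
  right_inv g := by
    apply Subtype.ext
    funext x
    show (key1Inv v n g.1 (x.1, false), key1Inv v n g.1 (x.1, true)) = _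
    unfold key1Inv
    simp only [dif_pos x.2, cond_false, cond_true]

lemma key1Equiv_symm_apply {v : Face} {n : ℕ} {i j : Bool} {σ : SpinConf}
    (hΛ : IsDiamond v n) (hσ : OmegaSpin v n i j σ)
    (g : ↥(Fintype.piFinset (fun x : ↥(Dfin v n) => allowedF σ x.1))) :
    ((key1Equiv v n i j σ hΛ hσ).symm g).1 = key1Inv v n g.1 := rfl

lemma key1Inv_false {v : Face} {n : ℕ} (g : (x : ↥(Dfin v n)) → Bool × Bool)
    (x : ↥(Dfin v n)) : key1Inv v n g (x.1, false) = (g x).1 := by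
  unfold key1Inv
  rw [dif_pos x.2]
  rfl

lemma key1Inv_true {v : Face} {n : ℕ} (g : (x : ↥(Dfin v n)) → Bool × Bool)
    (x : ↥(Dfin v n)) : key1Inv v n g (x.1, true) = (g x).2 := by
  unfold key1Inv
  rw [dif_pos x.2]
  rfl

set_option maxHeartbeats 2000000 in
lemma NDelta_eq_card {v : Face} {n : ℕ} (η : SIConf) :
    NDelta (deltaOf v n) η =
      ((Dfin v n).filter (fun x => η (x, false) = true ∧ η (x, true) = true)).card := by
  unfold NDelta
  rw [← Set.ncard_coe_finset]
  congr 1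
  ext x
  simp only [Finset.coe_filter, Set.mem_setOf_eq, mem_Dfin, OpenCross]
  constructor
  · rintro ⟨h1, h2⟩
    exact ⟨by rcases h2 with h | h <;> exact mem_deltaOf.mp h, h1⟩
  · rintro ⟨h1, h2⟩
    exact ⟨h2, Or.inl (mem_deltaOf.mpr h1)⟩

lemma weight_prod {v : Face} {n : ℕ} {α : ℝ} (hα : 0 ≤ α) (η : SIConf) :
    ENNReal.ofReal (α ^ NDelta (deltaOf v n) η) =
      ∏ x ∈ Dfin v n,
        (if η (x, false) = true ∧ η (x, true) = true then ENNReal.ofReal α else 1) := by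
  rw [NDelta_eq_card, ENNReal.ofReal_pow hα, ← Finset.prod_const, Finset.prod_filter]

lemma factor_eq {c : ℝ} (hc : 2 < c) {σ : SpinConf} {x : Vx}
    (hice : σ (x - (1,1)) = σ x ∨ σ (x - (1,0)) = σ (x - (0,1))) :
    (∑ bp ∈ allowedF σ x,
      (if bp.1 = true ∧ bp.2 = true then ENNReal.ofReal (c - 2) else 1)) =
      (if sadP σ x then ENNReal.ofReal c else 1) := by
  have e1 : ENNReal.ofReal (c - 2) + 1 + 1 = ENNReal.ofReal c := by
    rw [← ENNReal.ofReal_one, ← ENNReal.ofReal_add (by linarith) zero_le_one,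
      ← ENNReal.ofReal_add (by linarith) zero_le_one]
    congr 1
    ring
  unfold allowedF
  rw [Finset.sum_filter]
  by_cases h0 : σ (x - (1,1)) = σ x <;> by_cases h1 : σ (x - (1,0)) = σ (x - (0,1))
  · simp only [allowedP, sadP, h0, h1, Fintype.sum_prod_type, Fintype.sum_bool]
    simpa using e1
  · simp only [allowedP, sadP, h0, h1, Fintype.sum_prod_type, Fintype.sum_bool]
    simp [h1]
  · simp only [allowedP, sadP, h0, h1, Fintype.sum_prod_type, Fintype.sum_bool]
    simp [h0, h1]
  · exact absurd hice (by tauto)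

lemma saddleCount_eq {v : Face} {n : ℕ} {σ : SpinConf} (hΛ : IsDiamond v n) :
    saddleCount v n σ = ((Dfin v n).filter (fun x => sadP σ x)).card := by
  unfold saddleCount
  rw [← Set.ncard_coe_finset]
  congr 1
  ext x
  simp only [Finset.coe_filter, Set.mem_setOf_eq, mem_Dfin,
    internal_iff_crossIn hΛ, saddle_iff_sadP]

set_option maxHeartbeats 1000000 in
lemma key1 {v : Face} {n : ℕ} {i j : Bool} {c : ℝ} (hc : 2 < c) (hΛ : IsDiamond v n)
    {σ : SpinConf} (hσ : OmegaSpin v n i j σ) :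
    (∑' η : {η : SIConf // SIok (deltaOf v n) wiredwired η ∧ Compat σ η},
      ENNReal.ofReal ((c - 2) ^ NDelta (deltaOf v n) η.1)) =
      ENNReal.ofReal (c ^ saddleCount v n σ) := by
  classical
  have hα : (0:ℝ) ≤ c - 2 := by linarith
  rw [← Equiv.tsum_eq (key1Equiv v n i j σ hΛ hσ).symm, tsum_fintype]
  have hsummand : ∀ g : ↥(Fintype.piFinset (fun x : ↥(Dfin v n) => allowedF σ x.1)),
      ENNReal.ofReal ((c - 2) ^ NDelta (deltaOf v n) ((key1Equiv v n i j σ hΛ hσ).symm g).1) =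
      ∏ x : ↥(Dfin v n),
        (if (g.1 x).1 = true ∧ (g.1 x).2 = true then ENNReal.ofReal (c - 2) else 1) := by
    intro g
    rw [key1Equiv_symm_apply, weight_prod hα, ← Finset.prod_coe_sort]
    exact Finset.prod_congr rfl fun x _ => by
      rw [show (x:Vx) = ((⟨x.1, x.2⟩ : ↥(Dfin v n)) : Vx) from rfl, key1Inv_false, key1Inv_true]
  rw [Finset.sum_congr rfl fun g _ => hsummand g]
  rw [Finset.sum_coe_sort (Fintype.piFinset (fun x : ↥(Dfin v n) => allowedF σ x.1))
    (fun g => ∏ x : ↥(Dfin v n),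
      (if (g x).1 = true ∧ (g x).2 = true then ENNReal.ofReal (c - 2) else 1))]
  rw [show (∑ g ∈ Fintype.piFinset (fun x : ↥(Dfin v n) => allowedF σ x.1),
        ∏ x : ↥(Dfin v n), (if (g x).1 = true ∧ (g x).2 = true then ENNReal.ofReal (c - 2) else 1)) =
      ∏ x : ↥(Dfin v n), ∑ bp ∈ allowedF σ x.1,
        (if bp.1 = true ∧ bp.2 = true then ENNReal.ofReal (c - 2) else 1)
    from (Finset.prod_univ_sum (fun x : ↥(Dfin v n) => allowedF σ x.1)
      (fun _ bp => if bp.1 = true ∧ bp.2 = true then ENNReal.ofReal (c - 2) else 1)).symm]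
  rw [Finset.prod_congr rfl fun (x : ↥(Dfin v n)) _ => factor_eq hc (hσ.1 x.1)]
  rw [Finset.prod_coe_sort (Dfin v n) (fun x => if sadP σ x then ENNReal.ofReal c else 1)]
  rw [← Finset.prod_filter, Finset.prod_const, ← saddleCount_eq hΛ,
    ← ENNReal.ofReal_pow (by linarith : (0:ℝ) ≤ c)]

/-! ### Connectivity lemmas for the superimposed configuration -/

lemma openAdj_symm {η : SIConf} {p q : Face} (h : OpenAdj η p q) : OpenAdj η q p := by
  obtain ⟨e, he, h⟩ := h
  exact ⟨e, he, h.symm⟩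

lemma conn_symm {η : SIConf} {p q : Face} (h : ConnectedIn η p q) : ConnectedIn η q p := by
  induction h with
  | refl => exact Relation.ReflTransGen.refl
  | tail _ hbc ih => exact Relation.ReflTransGen.head (openAdj_symm hbc) ih

lemma mem_cluster_self (η : SIConf) (p : Face) : p ∈ cluster η p :=
  Relation.ReflTransGen.refl

lemma cluster_eq_of_conn {η : SIConf} {p q : Face} (h : ConnectedIn η p q) :
    cluster η p = cluster η q := by
  ext r
  constructor
  · exact fun hr => Relation.ReflTransGen.trans (conn_symm h) hr
  · exact fun hr => Relation.ReflTransGen.trans h hr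

lemma compat_conn {η : SIConf} {σ : SpinConf} (hσ : Compat σ η) {p q : Face}
    (h : ConnectedIn η p q) : σ p = σ q := by
  induction h with
  | refl => rfl
  | tail _ hbc ih =>
    refine ih.trans ?_
    obtain ⟨e, he, heq | heq⟩ := hbc
    · have h2 := hσ e he
      rw [show _ = _ from congrArg Prod.fst heq, show _ = _ from congrArg Prod.snd heq] at h2
      exact h2
    · have h2 := (hσ e he).symm
      rw [show _ = _ from congrArg Prod.fst heq, show _ = _ from congrArg Prod.snd heq] at h2
      exact h2

lemma openAdj_parity {η : SIConf} {p q : Face} (h : OpenAdj η p q) :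
    (Even (p.1 + p.2) ↔ Even (q.1 + q.2)) := by
  obtain ⟨e, _, heq | heq⟩ := h
  · have := ep_parity e
    rw [show _ = _ from congrArg Prod.fst heq, show _ = _ from congrArg Prod.snd heq] at this
    exact this
  · have := ep_parity e
    rw [show _ = _ from congrArg Prod.fst heq, show _ = _ from congrArg Prod.snd heq] at this
    exact this.symm

lemma conn_parity {η : SIConf} {p q : Face} (h : ConnectedIn η p q) :
    (Even (p.1 + p.2) ↔ Even (q.1 + q.2)) := by
  induction h with
  | refl => exact Iff.rfl
  | tail _ hbc ih => exact ih.trans (openAdj_parity hbc)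

lemma edge_open_far {v : Face} {n : ℕ} {η : SIConf} (hΛ : IsDiamond v n)
    (hη : SIok (deltaOf v n) wiredwired η) (e : Edge)
    (h : n + 2 ≤ fdist (ep e).1 v ∨ n + 2 ≤ fdist (ep e).2 v) : η e = true := by
  have hne : e ∉ deltaOf v n := by
    intro hc
    rw [mem_deltaOf] at hc
    obtain ⟨hc1, hc2⟩ := hc
    rcases e with ⟨x, b⟩
    unfold LEdgeAt at hc1 hc2
    unfold diamond at hc1 hc2
    rcases Int.even_or_odd (x.1 + x.2) with hx | hx
    · rw [if_pos hx] at hc1 hc2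
      simp only [ep_false, Set.mem_setOf_eq] at hc1 hc2
      cases b <;>
        simp only [ep_false, ep_true] at h <;>
        unfold fdist at h hc1 hc2 <;>
        simp only [psub_def, sub_zero] at h hc1 hc2 <;> omega
    · rw [if_neg (Int.not_even_iff_odd.mpr hx)] at hc1 hc2
      simp only [ep_true, Set.mem_setOf_eq] at hc1 hc2
      cases b <;>
        simp only [ep_false, ep_true] at h <;>
        unfold fdist at h hc1 hc2 <;>
        simp only [psub_def, sub_zero] at h hc1 hc2 <;> omega
  rw [hη.2 e hne]
  rfl

lemma openAdj_step {v : Face} {n : ℕ} {η : SIConf} (hΛ : IsDiamond v n)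
    (hη : SIok (deltaOf v n) wiredwired η) (p : Face) (s t : ℤ)
    (hs : s = 1 ∨ s = -1) (ht : t = 1 ∨ t = -1)
    (hfar : n + 2 ≤ fdist p v ∨ n + 2 ≤ fdist (p.1 + s, p.2 + t) v) :
    OpenAdj η p (p.1 + s, p.2 + t) := by
  unfold fdist at hfar
  rcases hs with rfl | rfl <;> rcases ht with rfl | rfl
  · refine ⟨((p.1 + 1, p.2 + 1), false), edge_open_far hΛ hη _ ?_, Or.inl ?_⟩
    · simp only [ep_false, psub_def]
      unfold fdist
      dsimp only
      omega
    · simp only [ep_false, psub_def, Prod.ext_iff, Prod.mk.injEq]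
      constructor
      · constructor <;> omega
      · constructor <;> rfl
  · refine ⟨((p.1 + 1, p.2), true), edge_open_far hΛ hη _ ?_, Or.inl ?_⟩
    · simp only [ep_true, psub_def]
      unfold fdist
      dsimp only
      omega
    · simp only [ep_true, psub_def, Prod.ext_iff, Prod.mk.injEq]
      constructor
      · constructor <;> omega
      · constructor <;> omega
  · refine ⟨((p.1, p.2 + 1), true), edge_open_far hΛ hη _ ?_, Or.inr ?_⟩
    · simp only [ep_true, psub_def]
      unfold fdist
      dsimp only
      omega
    · simp only [ep_true, psub_def, Prod.ext_iff, Prod.mk.injEq]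
      constructor
      · constructor <;> omega
      · constructor <;> omega
  · refine ⟨((p.1, p.2), false), edge_open_far hΛ hη _ ?_, Or.inr ?_⟩
    · simp only [ep_false, psub_def]
      unfold fdist
      dsimp only
      omega
    · simp only [ep_false, psub_def, Prod.ext_iff, Prod.mk.injEq]
      constructor
      · constructor <;> omega
      · constructor <;> rfl

lemma conn_out {v : Face} {n : ℕ} {η : SIConf} (hΛ : IsDiamond v n)
    (hη : SIok (deltaOf v n) wiredwired η) (k : ℕ) :
    ∀ p : Face, n ≤ fdist p v →
      ∃ q : Face, ConnectedIn η p q ∧ fdist q v = fdist p v + 2 * k := by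
  induction k with
  | zero => exact fun p _ => ⟨p, Relation.ReflTransGen.refl, by omega⟩
  | succ k ih =>
    intro p hp
    obtain ⟨s, hs, t, ht, hd⟩ : ∃ s, (s = 1 ∨ s = -1) ∧ ∃ t, (t = 1 ∨ t = -1) ∧
        fdist (p.1 + s, p.2 + t) v = fdist p v + 2 := by
      by_cases h1 : 0 ≤ p.1 - v.1 <;> by_cases h2 : 0 ≤ p.2 - v.2
      · exact ⟨1, Or.inl rfl, 1, Or.inl rfl, by unfold fdist; dsimp only; omega⟩
      · exact ⟨1, Or.inl rfl, -1, Or.inr rfl, by unfold fdist; dsimp only; omega⟩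
      · exact ⟨-1, Or.inr rfl, 1, Or.inl rfl, by unfold fdist; dsimp only; omega⟩
      · exact ⟨-1, Or.inr rfl, -1, Or.inr rfl, by unfold fdist; dsimp only; omega⟩
    have step : OpenAdj η p (p.1 + s, p.2 + t) :=
      openAdj_step hΛ hη p s t hs ht (Or.inr (by omega))
    obtain ⟨q, hq, hqd⟩ := ih (p.1 + s, p.2 + t) (by omega)
    exact ⟨q, Relation.ReflTransGen.head step hq, by omega⟩

lemma conn_ring {v : Face} {n : ℕ} {η : SIConf} (hΛ : IsDiamond v n)
    (hη : SIok (deltaOf v n) wiredwired η) (m : ℕ) (hm : n + 2 ≤ m) :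
    ∀ (r : ℕ) (p : Face), fdist p v = m → (m : ℤ) - (p.1 - v.1) ≤ r →
      ConnectedIn η p (v.1 + m, v.2) := by
  intro r
  induction r with
  | zero =>
    intro p hpm hr
    have hpe : p = (v.1 + (m:ℤ), v.2) := by
      unfold fdist at hpm
      rw [Prod.ext_iff]
      constructor <;> dsimp only <;> omega
    rw [hpe]
    exact Relation.ReflTransGen.refl
  | succ r ih =>
    intro p hpm hr
    by_cases hend : p = (v.1 + (m:ℤ), v.2)
    · rw [hend]
      exact Relation.ReflTransGen.refl
    · have hne2 : ¬(p.1 - v.1 = m ∧ p.2 - v.2 = 0) := by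
        intro ⟨ha, hb⟩
        exact hend (by rw [Prod.ext_iff]; constructor <;> omega)
      obtain ⟨t, ht, hd⟩ : ∃ t, (t = 1 ∨ t = -1) ∧ fdist (p.1 + 1, p.2 + t) v = m := by
        by_cases hc : (0 ≤ p.1 - v.1 ∧ 0 < p.2 - v.2) ∨ (p.1 - v.1 < 0 ∧ p.2 - v.2 < 0)
        · exact ⟨-1, Or.inr rfl, by unfold fdist at hpm ⊢; dsimp only; omega⟩
        · exact ⟨1, Or.inl rfl, by unfold fdist at hpm ⊢; dsimp only; omega⟩
      have step : OpenAdj η p (p.1 + 1, p.2 + t) :=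
        openAdj_step hΛ hη p 1 t (Or.inl rfl) ht (Or.inl (by omega))
      exact Relation.ReflTransGen.head step (ih (p.1 + 1, p.2 + t) hd (by dsimp only; omega))

lemma fdist_parity {v : Face} (hv : Even (v.1 + v.2)) (p : Face) :
    (Even (fdist p v) ↔ Even (p.1 + p.2)) := by
  unfold fdist
  rw [Int.even_iff] at hv ⊢
  rw [Nat.even_iff]
  omega

lemma conn_far {v : Face} {n : ℕ} {η : SIConf} (hΛ : IsDiamond v n)
    (hη : SIok (deltaOf v n) wiredwired η) (p q : Face)
    (hp : n ≤ fdist p v) (hq : n ≤ fdist q v)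
    (hpar : Even (p.1 + p.2) ↔ Even (q.1 + q.2)) : ConnectedIn η p q := by
  obtain ⟨hv, hn, hne⟩ := hΛ
  have hn2 : 2 ≤ n := by
    rcases hne with ⟨r, hr⟩
    omega
  have hd2 : fdist p v % 2 = fdist q v % 2 := by
    have h1 := (fdist_parity hv p).trans (hpar.trans (fdist_parity hv q).symm)
    rw [Nat.even_iff, Nat.even_iff] at h1
    omega
  set D : ℕ := fdist p v + 2 * fdist q v with hD
  obtain ⟨p', hp', hpd⟩ := conn_out ⟨hv, hn, hne⟩ hη (fdist q v) p hp
  obtain ⟨q', hq', hqd⟩ := conn_out ⟨hv, hn, hne⟩ hη ((fdist p v + fdist q v) / 2) q hq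
  have hqd' : fdist q' v = D := by omega
  have hpd' : fdist p' v = D := by omega
  have h1 : ConnectedIn η p' (v.1 + (D:ℤ), v.2) := by
    refine conn_ring ⟨hv, hn, hne⟩ hη D (by omega) (2 * D) p' hpd' ?_
    unfold fdist at hpd'
    omega
  have h2 : ConnectedIn η q' (v.1 + (D:ℤ), v.2) := by
    refine conn_ring ⟨hv, hn, hne⟩ hη D (by omega) (2 * D) q' hqd' ?_
    unfold fdist at hqd'
    omega
  exact ((hp'.trans h1).trans (conn_symm h2)).trans (conn_symm hq')

/-! ### Counting clusters -/

lemma touches_of_near {v : Face} {n : ℕ} (hΛ : IsDiamond v n) (p : Face)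
    (hp : fdist p v < n) : TouchesDelta (deltaOf v n) p := by
  obtain ⟨hv, hn, hne⟩ := hΛ
  rw [Int.even_iff] at hv; rw [Nat.even_iff] at hne
  rcases Int.even_or_odd (p.1 + p.2) with hpx | hpx
  · rw [Int.even_iff] at hpx
    refine ⟨((p.1 + 1, p.2 + 1), false), ?_, Or.inl ?_⟩
    · rw [mem_deltaOf]
      unfold crossIn LEdgeAt
      rw [if_pos (by dsimp only; rw [Int.even_iff]; omega)]
      constructor <;>
      · show _ ∈ diamond v n
        unfold diamond fdist
        simp only [ep_false, psub_def, Set.mem_setOf_eq]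
        unfold fdist at hp
        omega
    · simp only [ep_false, psub_def, Prod.ext_iff]
      constructor <;> omega
  · rw [Int.odd_iff] at hpx
    refine ⟨((p.1 + 1, p.2), true), ?_, Or.inl ?_⟩
    · rw [mem_deltaOf]
      unfold crossIn LEdgeAt
      rw [if_pos (by dsimp only; rw [Int.even_iff]; omega)]
      constructor <;>
      · show _ ∈ diamond v n
        unfold diamond fdist
        simp only [ep_false, psub_def, Set.mem_setOf_eq]
        unfold fdist at hp
        omega
    · simp only [ep_true, psub_def, Prod.ext_iff]
      constructor <;> omega

lemma touches_pL {v : Face} {n : ℕ} (hΛ : IsDiamond v n) :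
    TouchesDelta (deltaOf v n) (v.1 + (n:ℤ), v.2) := by
  obtain ⟨hv, hn, hne⟩ := hΛ
  rw [Int.even_iff] at hv; rw [Nat.even_iff] at hne
  refine ⟨((v.1 + (n:ℤ), v.2), false), ?_, Or.inr ?_⟩
  · rw [mem_deltaOf]
    unfold crossIn LEdgeAt
    rw [if_pos (by dsimp only; rw [Int.even_iff]; omega)]
    constructor <;>
    · show _ ∈ diamond v n
      unfold diamond fdist
      simp only [ep_false, psub_def, Set.mem_setOf_eq]
      omega
  · rfl

lemma touches_pLs {v : Face} {n : ℕ} (hΛ : IsDiamond v n) :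
    TouchesDelta (deltaOf v n) (v.1 + (n:ℤ), v.2 + 1) := by
  obtain ⟨hv, hn, hne⟩ := hΛ
  rw [Int.even_iff] at hv; rw [Nat.even_iff] at hne
  refine ⟨((v.1 + (n:ℤ), v.2 + 1), false), ?_, Or.inr ?_⟩
  · rw [mem_deltaOf]
    unfold crossIn LEdgeAt
    rw [if_neg (by dsimp only; rw [Int.even_iff]; omega)]
    constructor <;>
    · show _ ∈ diamond v n
      unfold diamond fdist
      simp only [ep_true, psub_def, Set.mem_setOf_eq]
      omega
  · rfl

/-- The set of free (entirely interior) clusters. -/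
def SfreeSet (v : Face) (n : ℕ) (η : SIConf) : Set (Set Face) :=
  {C | (∃ p, C = cluster η p) ∧ ∀ q ∈ C, fdist q v < n}

lemma ball_finite (v : Face) (n : ℕ) : {p : Face | fdist p v < n}.Finite := by
  apply Set.Finite.subset
    (Finset.finite_toSet (Finset.Icc ((v.1 - n, v.2 - n) : Face) (v.1 + n, v.2 + n)))
  intro p hp
  simp only [Set.mem_setOf_eq] at hp
  unfold fdist at hp
  simp only [Finset.coe_Icc, Set.mem_Icc, Prod.le_def]
  omega

lemma Sfree_finite (v : Face) (n : ℕ) (η : SIConf) : (SfreeSet v n η).Finite := by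
  apply Set.Finite.subset ((ball_finite v n).image (cluster η))
  rintro C ⟨⟨p, rfl⟩, hb⟩
  exact ⟨p, hb p (mem_cluster_self η p), rfl⟩

lemma fdist_pL {v : Face} {n : ℕ} : fdist ((v.1 + (n:ℤ), v.2) : Face) v = n := by
  unfold fdist; dsimp only; omega

lemma fdist_pLs {v : Face} {n : ℕ} : fdist ((v.1 + (n:ℤ), v.2 + 1) : Face) v = n + 1 := by
  unfold fdist; dsimp only; omega

lemma kDelta_eq {v : Face} {n : ℕ} {η : SIConf} (hΛ : IsDiamond v n)
    (hη : SIok (deltaOf v n) wiredwired η) :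
    kDelta (deltaOf v n) η = (SfreeSet v n η).ncard + 2 := by
  classical
  have hv := hΛ.1
  have hn := hΛ.2.1
  have hne := hΛ.2.2
  set CL := cluster η (v.1 + (n:ℤ), v.2) with hCL
  set CLs := cluster η (v.1 + (n:ℤ), v.2 + 1) with hCLs
  have hparL : Even ((v.1 + (n:ℤ)) + v.2) := by
    rw [Int.even_iff] at hv ⊢; rw [Nat.even_iff] at hne; omega
  have hparLs : ¬ Even ((v.1 + (n:ℤ)) + (v.2 + 1)) := by
    rw [Int.even_iff] at hv ⊢; rw [Nat.even_iff] at hne; omega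
  have hKeq : {C : Set Face | ∃ p, TouchesDelta (deltaOf v n) p ∧ C = cluster η p} =
      SfreeSet v n η ∪ {CL, CLs} := by
    ext C
    constructor
    · rintro ⟨p, hpt, rfl⟩
      by_cases hb : ∀ q ∈ cluster η p, fdist q v < n
      · exact Or.inl ⟨⟨p, rfl⟩, hb⟩
      · push_neg at hb
        obtain ⟨q, hq, hqd⟩ := hb
        have hcl : cluster η p = cluster η q := cluster_eq_of_conn hq
        rcases Int.even_or_odd (q.1 + q.2) with hqp | hqp
        · refine Or.inr (Or.inl ?_)
          rw [hcl, hCL]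
          exact cluster_eq_of_conn (conn_far hΛ hη q _ (by omega)
            (le_of_eq fdist_pL.symm) (iff_of_true hqp hparL))
        · refine Or.inr (Or.inr ?_)
          rw [hcl, hCLs]
          exact cluster_eq_of_conn (conn_far hΛ hη q _ (by omega)
            (by rw [fdist_pLs]; omega) (iff_of_false (Int.not_even_iff_odd.mpr hqp) hparLs))
    · rintro (⟨⟨p, rfl⟩, hb⟩ | hC)
      · exact ⟨p, touches_of_near hΛ p (hb p (mem_cluster_self η p)), rfl⟩
      · rcases hC with hC | hC
        · exact ⟨_, touches_pL hΛ, hC⟩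
        · exact ⟨_, touches_pLs hΛ, hC⟩
  have hCLne : CL ≠ CLs := by
    intro h
    have hm : ((v.1 + (n:ℤ), v.2 + 1) : Face) ∈ CL := by
      rw [h]; exact mem_cluster_self η _
    have hpar := conn_parity hm
    exact hparLs (hpar.mp hparL)
  have hdisj : Disjoint (SfreeSet v n η) ({CL, CLs} : Set (Set Face)) := by
    rw [Set.disjoint_left]
    rintro C ⟨⟨p, rfl⟩, hb⟩ hmem
    rcases hmem with hC | hC
    · have h1 : ((v.1 + (n:ℤ), v.2) : Face) ∈ cluster η p := by
        rw [hC]; exact mem_cluster_self η _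
      have h2 := hb _ h1
      rw [fdist_pL] at h2
      omega
    · have hC2 : cluster η p = CLs := hC
      have h1 : ((v.1 + (n:ℤ), v.2 + 1) : Face) ∈ cluster η p := by
        rw [hC2]; exact mem_cluster_self η _
      have h2 := hb _ h1
      rw [fdist_pLs] at h2
      omega
  unfold kDelta
  rw [hKeq, Set.ncard_union_eq hdisj (Sfree_finite v n η)
    ((Set.finite_singleton CLs).insert CL), Set.ncard_pair hCLne]

/-! ### The spin fiber over a superimposed configuration -/

def bval (i j : Bool) (p : Face) : Bool := if Even (p.1 + p.2) then j else i

lemma bval_congr {i j : Bool} {p q : Face} (h : Even (p.1 + p.2) ↔ Even (q.1 + q.2)) :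
    bval i j p = bval i j q := by
  unfold bval
  by_cases hp : Even (p.1 + p.2)
  · rw [if_pos hp, if_pos (h.mp hp)]
  · rw [if_neg hp, if_neg (fun hh => hp (h.mpr hh))]

lemma iceRule_of_compat {η : SIConf} {σ : SpinConf} (hnc : NoClosedCross η)
    (hcp : Compat σ η) : IceRule σ := by
  intro x
  rcases hnc x with h | h
  · exact Or.inl (hcp (x, false) h)
  · exact Or.inr (hcp (x, true) h)

open Classical in
/-- the inverse of the fiber bijection -/
noncomputable def key2Inv (v : Face) (n : ℕ) (i j : Bool) (η : SIConf)
    (g : ↥(SfreeSet v n η) → Bool) : SpinConf :=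
  fun p => if h : cluster η p ∈ SfreeSet v n η then g ⟨cluster η p, h⟩ else bval i j p

lemma key2Inv_compat {v : Face} {n : ℕ} {i j : Bool} {η : SIConf}
    (g : ↥(SfreeSet v n η) → Bool) : Compat (key2Inv v n i j η g) η := by
  intro e he
  have hconn : ConnectedIn η (ep e).1 (ep e).2 :=
    Relation.ReflTransGen.single ⟨e, he, Or.inl rfl⟩
  have hcl : cluster η (ep e).1 = cluster η (ep e).2 := cluster_eq_of_conn hconn
  unfold key2Inv
  rw [hcl]
  by_cases h : cluster η (ep e).2 ∈ SfreeSet v n η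
  · rw [dif_pos h, dif_pos h]
  · rw [dif_neg h, dif_neg h]
    exact bval_congr (conn_parity hconn)

lemma key2Inv_omega {v : Face} {n : ℕ} {i j : Bool} {η : SIConf} (hΛ : IsDiamond v n)
    (hη : SIok (deltaOf v n) wiredwired η) (g : ↥(SfreeSet v n η) → Bool) :
    OmegaSpin v n i j (key2Inv v n i j η g) := by
  refine ⟨iceRule_of_compat hη.1 (key2Inv_compat g), fun p hp => ?_⟩
  unfold key2Inv
  rw [dif_neg]
  · rfl
  · intro hS
    exact absurd (hS.2 p (mem_cluster_self η p)) (by omega)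

/-- The fiber bijection. -/
noncomputable def key2Equiv {v : Face} {n : ℕ} {i j : Bool} {η : SIConf}
    (hΛ : IsDiamond v n) (hη : SIok (deltaOf v n) wiredwired η) :
    {σ : SpinConf // OmegaSpin v n i j σ ∧ Compat σ η} ≃ (↥(SfreeSet v n η) → Bool) where
  toFun σ C := σ.1 C.2.1.choose
  invFun g := ⟨key2Inv v n i j η g, key2Inv_omega hΛ hη g, key2Inv_compat g⟩
  left_inv σ := by
    apply Subtype.ext
    funext p
    dsimp only
    unfold key2Inv
    by_cases h : cluster η p ∈ SfreeSet v n η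
    · rw [dif_pos h]
      have hspec := h.1.choose_spec
      have hmem : p ∈ cluster η h.1.choose := hspec ▸ mem_cluster_self η p
      exact compat_conn σ.2.2 hmem
    · rw [dif_neg h]
      have hB : ∃ q ∈ cluster η p, ¬ fdist q v < n := by
        by_contra hb
        push_neg at hb
        exact h ⟨⟨p, rfl⟩, hb⟩
      obtain ⟨q, hq, hqd⟩ := hB
      have h1 : σ.1 p = σ.1 q := compat_conn σ.2.2 hq
      have h2 : σ.1 q = bval i j q := σ.2.1.2 q (by omega)
      rw [h1, h2]
      exact bval_congr (conn_parity hq)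
  right_inv g := by
    funext C
    dsimp only
    have hspec := C.2.1.choose_spec
    unfold key2Inv
    have h : cluster η C.2.1.choose ∈ SfreeSet v n η := hspec ▸ C.2
    rw [dif_pos h]
    congr 1
    exact Subtype.ext hspec.symm

lemma key2 {v : Face} {n : ℕ} {i j : Bool} {η : SIConf} (hΛ : IsDiamond v n)
    (hη : SIok (deltaOf v n) wiredwired η) (w : ℝ≥0∞) :
    (4 : ℝ≥0∞) * ∑' _σ : {σ : SpinConf // OmegaSpin v n i j σ ∧ Compat σ η}, w =
      2 ^ kDelta (deltaOf v n) η * w := by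
  classical
  haveI : Fintype ↥(SfreeSet v n η) := (Sfree_finite v n η).fintype
  rw [← Equiv.tsum_eq (key2Equiv hΛ hη).symm (fun _ => w)]
  rw [tsum_fintype, Finset.sum_const, Finset.card_univ, Fintype.card_fun, Fintype.card_bool]
  have hcard : Fintype.card ↥(SfreeSet v n η) = (SfreeSet v n η).ncard := by
    rw [← Nat.card_eq_fintype_card, Nat.card_coe_set_eq]
  rw [hcard, kDelta_eq hΛ hη, nsmul_eq_mul, pow_add]
  push_cast
  ring

end Aux

/-- The pairs charged by the Edwards–Sokal-type coupling `P̄^{ij}_{Λ,α}`: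
`σ ∈ Ω^{spin,ij}_Λ`, `η ∈ Ω^{SI,11}_{Δ(Λ)}`, and `σ ∼ η`. -/
def OkPair (v : Face) (n : ℕ) (i j : Bool) (p : SpinConf × SIConf) : Prop :=
  OmegaSpin v n i j p.1 ∧ SIok (deltaOf v n) wiredwired p.2 ∧ Compat p.1 p.2

/-- The coupling `P̄^{ij}_{Λ,α}`, giving the pair `(σ, η)` probability proportional to
`α^{N_Δ(η)} 1{σ ∼ η}`. -/
noncomputable def couplingFin (v : Face) (n : ℕ) (α : ℝ) (i j : Bool) :
    Measure (SpinConf × SIConf) :=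
  (∑' p : {p : SpinConf × SIConf // OkPair v n i j p},
      ENNReal.ofReal (α ^ NDelta (deltaOf v n) p.1.2))⁻¹ •
    Measure.sum (fun p : {p : SpinConf × SIConf // OkPair v n i j p} =>
      ENNReal.ofReal (α ^ NDelta (deltaOf v n) p.1.2) • Measure.dirac p.1)

section Shell

/-- regroup pairs by the spin configuration -/
def sig1 (v : Face) (n : ℕ) (i j : Bool) :
    {p : SpinConf × SIConf // OkPair v n i j p} ≃
      Σ σ : {σ : SpinConf // OmegaSpin v n i j σ},
        {η : SIConf // SIok (deltaOf v n) wiredwired η ∧ Compat σ.1 η} where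
  toFun p := ⟨⟨p.1.1, p.2.1⟩, ⟨p.1.2, p.2.2.1, p.2.2.2⟩⟩
  invFun s := ⟨(s.1.1, s.2.1), s.1.2, s.2.2.1, s.2.2.2⟩
  left_inv p := rfl
  right_inv s := rfl

/-- regroup pairs by the superimposed configuration -/
def sig2 (v : Face) (n : ℕ) (i j : Bool) :
    {p : SpinConf × SIConf // OkPair v n i j p} ≃
      Σ η : {η : SIConf // SIok (deltaOf v n) wiredwired η},
        {σ : SpinConf // OmegaSpin v n i j σ ∧ Compat σ η.1} where
  toFun p := ⟨⟨p.1.2, p.2.2.1⟩, ⟨p.1.1, p.2.1, p.2.2.2⟩⟩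
  invFun s := ⟨(s.2.1, s.1.1), s.2.2.1, s.1.2, s.2.2.2⟩
  left_inv p := rfl
  right_inv s := rfl

lemma sum1 {v : Face} {n : ℕ} {i j : Bool} {c : ℝ} (hc : 2 < c) (hΛ : IsDiamond v n)
    (φ : SpinConf → ℝ≥0∞) :
    (∑' p : {p : SpinConf × SIConf // OkPair v n i j p},
        ENNReal.ofReal ((c - 2) ^ NDelta (deltaOf v n) p.1.2) * φ p.1.1) =
      ∑' σ : {σ : SpinConf // OmegaSpin v n i j σ}, spinWeight v n c σ.1 * φ σ.1 := by
  rw [← Equiv.tsum_eq (sig1 v n i j).symm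
    (fun p => ENNReal.ofReal ((c - 2) ^ NDelta (deltaOf v n) p.1.2) * φ p.1.1),
    ENNReal.tsum_sigma']
  refine tsum_congr fun σ => ?_
  have h1 : ∀ ηf : {η : SIConf // SIok (deltaOf v n) wiredwired η ∧ Compat σ.1 η},
      (ENNReal.ofReal ((c - 2) ^
          NDelta (deltaOf v n) ((sig1 v n i j).symm ⟨σ, ηf⟩).1.2) *
        φ ((sig1 v n i j).symm ⟨σ, ηf⟩).1.1) =
      ENNReal.ofReal ((c - 2) ^ NDelta (deltaOf v n) ηf.1) * φ σ.1 := fun _ => rfl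
  rw [tsum_congr h1, ENNReal.tsum_mul_right, key1 hc hΛ σ.2]
  rfl

lemma SIweight_eq {v : Face} {n : ℕ} {α : ℝ} (hα : 0 ≤ α) (η : SIConf) :
    SIweight (deltaOf v n) α 2 η =
      ENNReal.ofReal (α ^ NDelta (deltaOf v n) η) * 2 ^ kDelta (deltaOf v n) η := by
  unfold SIweight
  rw [ENNReal.ofReal_mul (pow_nonneg hα _), ENNReal.ofReal_pow (by norm_num : (0:ℝ) ≤ 2)]
  norm_num

lemma sum2 {v : Face} {n : ℕ} {i j : Bool} {c : ℝ} (hc : 2 < c) (hΛ : IsDiamond v n)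
    (ψ : SIConf → ℝ≥0∞) :
    (4 : ℝ≥0∞) * (∑' p : {p : SpinConf × SIConf // OkPair v n i j p},
        ENNReal.ofReal ((c - 2) ^ NDelta (deltaOf v n) p.1.2) * ψ p.1.2) =
      ∑' η : {η : SIConf // SIok (deltaOf v n) wiredwired η},
        SIweight (deltaOf v n) (c - 2) 2 η.1 * ψ η.1 := by
  rw [← Equiv.tsum_eq (sig2 v n i j).symm
    (fun p => ENNReal.ofReal ((c - 2) ^ NDelta (deltaOf v n) p.1.2) * ψ p.1.2),
    ENNReal.tsum_sigma', ← ENNReal.tsum_mul_left]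
  refine tsum_congr fun η => ?_
  have h1 : ∀ σf : {σ : SpinConf // OmegaSpin v n i j σ ∧ Compat σ η.1},
      (ENNReal.ofReal ((c - 2) ^
          NDelta (deltaOf v n) ((sig2 v n i j).symm ⟨η, σf⟩).1.2) *
        ψ ((sig2 v n i j).symm ⟨η, σf⟩).1.2) =
      ENNReal.ofReal ((c - 2) ^ NDelta (deltaOf v n) η.1) * ψ η.1 := fun _ => rfl
  rw [tsum_congr h1,
    key2 hΛ η.2 (ENNReal.ofReal ((c - 2) ^ NDelta (deltaOf v n) η.1) * ψ η.1),
    SIweight_eq (by linarith : (0:ℝ) ≤ c - 2) η.1]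
  ring

end Shell

/-- Let `c > 2`, `α = c - 2`, `i, j ∈ {+,-}`, `Λ` a diamond domain and `Δ = Δ(Λ)`.  The first
marginal of `P̄^{ij}_{Λ,α}` is the spin measure `P^{spin,ij}_{Λ,c}` and the second marginal is
the superimposed measure `P^{SI,11}_{Δ,α,2}`. -/
theorem stmt_12 (c : ℝ) (hc : 2 < c) (i j : Bool) (v : Face) (n : ℕ) (hΛ : IsDiamond v n) :
    Measure.map Prod.fst (couplingFin v n (c - 2) i j) = spinFin v n c i j ∧
    Measure.map Prod.snd (couplingFin v n (c - 2) i j) =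
      SIfin (deltaOf v n) (c - 2) 2 wiredwired := by
  constructor
  · ext s hs
    rw [Measure.map_apply measurable_fst hs]
    unfold couplingFin spinFin
    rw [Measure.smul_apply, Measure.smul_apply,
      Measure.sum_apply _ (measurable_fst hs), Measure.sum_apply _ hs]
    simp only [Measure.smul_apply, smul_eq_mul,
      Measure.dirac_apply' _ (measurable_fst hs), Measure.dirac_apply' _ hs]
    have hind : ∀ x : SpinConf × SIConf,
        (Prod.fst ⁻¹' s).indicator (1 : (SpinConf × SIConf) → ℝ≥0∞) x =
          s.indicator (1 : SpinConf → ℝ≥0∞) x.1 := by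
      intro x
      by_cases hx : x.1 ∈ s <;> simp [Set.indicator_apply, hx]
    have hZ : (∑' p : {p : SpinConf × SIConf // OkPair v n i j p},
        ENNReal.ofReal ((c - 2) ^ NDelta (deltaOf v n) p.1.2)) =
        ∑' σ : {σ : SpinConf // OmegaSpin v n i j σ}, spinWeight v n c σ.1 := by
      simpa using sum1 hc hΛ (fun _ => (1 : ℝ≥0∞))
    rw [hZ]
    congr 1
    rw [← sum1 hc hΛ (fun σ => s.indicator (1 : SpinConf → ℝ≥0∞) σ)]
    exact tsum_congr fun p => by rw [hind p.1]
  · ext s hs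
    rw [Measure.map_apply measurable_snd hs]
    unfold couplingFin SIfin
    rw [Measure.smul_apply, Measure.smul_apply,
      Measure.sum_apply _ (measurable_snd hs), Measure.sum_apply _ hs]
    simp only [Measure.smul_apply, smul_eq_mul,
      Measure.dirac_apply' _ (measurable_snd hs), Measure.dirac_apply' _ hs]
    have hind : ∀ x : SpinConf × SIConf,
        (Prod.snd ⁻¹' s).indicator (1 : (SpinConf × SIConf) → ℝ≥0∞) x =
          s.indicator (1 : SIConf → ℝ≥0∞) x.2 := by
      intro x
      by_cases hx : x.2 ∈ s <;> simp [Set.indicator_apply, hx]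
    have hT : (∑' p : {p : SpinConf × SIConf // OkPair v n i j p},
        ENNReal.ofReal ((c - 2) ^ NDelta (deltaOf v n) p.1.2) *
          (Prod.snd ⁻¹' s).indicator (1 : (SpinConf × SIConf) → ℝ≥0∞) p.1) =
        ∑' p : {p : SpinConf × SIConf // OkPair v n i j p},
          ENNReal.ofReal ((c - 2) ^ NDelta (deltaOf v n) p.1.2) *
            s.indicator (1 : SIConf → ℝ≥0∞) p.1.2 := tsum_congr fun p => by rw [hind p.1]
    rw [hT]
    have hZH : (∑' η : {η : SIConf // SIok (deltaOf v n) wiredwired η},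
        SIweight (deltaOf v n) (c - 2) 2 η.1) =
        4 * ∑' p : {p : SpinConf × SIConf // OkPair v n i j p},
          ENNReal.ofReal ((c - 2) ^ NDelta (deltaOf v n) p.1.2) := by
      have := sum2 (i := i) (j := j) hc hΛ (fun _ => (1 : ℝ≥0∞))
      simpa using this.symm
    rw [hZH, ← sum2 hc hΛ (fun η => s.indicator (1 : SIConf → ℝ≥0∞) η)]
    rw [ENNReal.mul_inv (Or.inl (by norm_num)) (Or.inl (by simp))]
    rw [show ((4:ℝ≥0∞)⁻¹ * (∑' p : {p : SpinConf × SIConf // OkPair v n i j p},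
          ENNReal.ofReal ((c - 2) ^ NDelta (deltaOf v n) p.1.2))⁻¹) *
        ((4:ℝ≥0∞) * ∑' p : {p : SpinConf × SIConf // OkPair v n i j p},
          ENNReal.ofReal ((c - 2) ^ NDelta (deltaOf v n) p.1.2) *
            s.indicator (1 : SIConf → ℝ≥0∞) p.1.2) =
        (((4:ℝ≥0∞)⁻¹ * 4) * ((∑' p : {p : SpinConf × SIConf // OkPair v n i j p},
          ENNReal.ofReal ((c - 2) ^ NDelta (deltaOf v n) p.1.2))⁻¹ *
          ∑' p : {p : SpinConf × SIConf // OkPair v n i j p},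
            ENNReal.ofReal ((c - 2) ^ NDelta (deltaOf v n) p.1.2) *
              s.indicator (1 : SIConf → ℝ≥0∞) p.1.2)) from by ring,
      ENNReal.inv_mul_cancel (by norm_num) (by simp), one_mul]

end SixVertex
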